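/- For every integer s ≥ 0 and every real x with 0 ≤ x ≤ √((4s+4)(4s+5)), the Taylor polynomial T_{4s+1}(x) = ∑_{i=0}^{2s} (−1)^i x^{2i+1}/(2i+1)! satisfies T_{4s+1}(x) ≥ T_{4s+5}(x) ≥ sin x. -/

import Mathlib

noncomputable def Ssum (n : ℕ) (x : ℝ) : ℝ :=
  ∑ i ∈ Finset.range n, (-1 : ℝ) ^ i * x ^ (2 * i + 1) / (Nat.factorial (2 * i + 1))

noncomputable def Csum (n : ℕ) (x : ℝ) : ℝ :=
  ∑ i ∈ Finset.range n, (-1 : ℝ) ^ i * x ^ (2 * i) / (Nat.factorial (2 * i))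

lemma hasDerivAt_Ssum (n : ℕ) (x : ℝ) : HasDerivAt (Ssum n) (Csum n x) x := by
  unfold Ssum Csum
  apply HasDerivAt.fun_sum
  intro i _
  have h := ((hasDerivAt_pow (2 * i + 1) x).const_mul ((-1:ℝ)^i)).div_const
    ((Nat.factorial (2 * i + 1) : ℝ))
  refine h.congr_deriv ?_
  have hf : (Nat.factorial (2 * i + 1) : ℝ) = (2 * i + 1) * Nat.factorial (2 * i) := by
    rw [Nat.factorial_succ]; push_cast; ring
  have hexp : 2 * i + 1 - 1 = 2 * i := by omega
  rw [hexp, hf]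
  have h0 : (Nat.factorial (2 * i) : ℝ) ≠ 0 := Nat.cast_ne_zero.mpr (Nat.factorial_ne_zero _)
  field_simp
  push_cast
  ring

lemma hasDerivAt_Csum (n : ℕ) (x : ℝ) : HasDerivAt (Csum (n + 1)) (-(Ssum n x)) x := by
  have heq : Csum (n + 1) = fun x : ℝ =>
      (∑ i ∈ Finset.range n, (-1 : ℝ) ^ (i + 1) * x ^ (2 * (i + 1)) / (Nat.factorial (2 * (i + 1)))) + 1 := by
    funext y
    unfold Csum
    rw [Finset.sum_range_succ']
    simp
  rw [heq]
  have h : HasDerivAt (fun x : ℝ =>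
      (∑ i ∈ Finset.range n, (-1 : ℝ) ^ (i + 1) * x ^ (2 * (i + 1)) / (Nat.factorial (2 * (i + 1)))) + 1)
      ((∑ i ∈ Finset.range n, (-1 : ℝ) ^ (i + 1) * ((2 * (i + 1) : ℕ) * x ^ (2 * (i + 1) - 1)) / (Nat.factorial (2 * (i + 1))))) x := by
    apply HasDerivAt.add_const
    apply HasDerivAt.fun_sum
    intro i _
    exact ((hasDerivAt_pow (2 * (i + 1)) x).const_mul _).div_const _
  convert h using 1
  unfold Ssum
  rw [neg_eq_iff_eq_neg, ← Finset.sum_neg_distrib]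
  apply Finset.sum_congr rfl
  intro i _
  have hf : (Nat.factorial (2 * (i + 1)) : ℝ) = (2 * (i + 1)) * Nat.factorial (2 * i + 1) := by
    have h2 : 2 * (i + 1) = (2 * i + 1) + 1 := by ring
    rw [h2, Nat.factorial_succ]; push_cast; ring
  have hexp : 2 * (i + 1) - 1 = 2 * i + 1 := by omega
  rw [hf, hexp]
  have h0 : (Nat.factorial (2 * i + 1) : ℝ) ≠ 0 := Nat.cast_ne_zero.mpr (Nat.factorial_ne_zero _)
  field_simp
  push_cast
  ring

lemma aux {f f' : ℝ → ℝ} (hd : ∀ x, HasDerivAt f (f' x) x) (h0 : f 0 = 0)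
    (h' : ∀ x, 0 ≤ x → 0 ≤ f' x) : ∀ x, 0 ≤ x → 0 ≤ f x := by
  intro x hx
  have hm : MonotoneOn f (Set.Ici 0) := by
    apply monotoneOn_of_deriv_nonneg (convex_Ici 0)
    · exact fun y _ => (hd y).continuousAt.continuousWithinAt
    · exact fun y _ => ((hd y).differentiableAt).differentiableWithinAt
    · intro y hy
      rw [interior_Ici] at hy
      rw [(hd y).deriv]
      exact h' y hy.le
  calc (0:ℝ) = f 0 := h0.symm
  _ ≤ f x := hm Set.self_mem_Ici hx hx

lemma Ssum_zero (n : ℕ) : Ssum n 0 = 0 := by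
  unfold Ssum
  apply Finset.sum_eq_zero
  intro i _
  simp

lemma Csum_zero (n : ℕ) : Csum (n + 1) 0 = 1 := by
  unfold Csum
  rw [Finset.sum_range_succ']
  have : ∀ i ∈ Finset.range n, (-1 : ℝ) ^ (i+1) * (0:ℝ) ^ (2 * (i+1)) / (Nat.factorial (2 * (i+1))) = 0 := by
    intro i _
    have : (0:ℝ) ^ (2 * (i+1)) = 0 := by
      apply zero_pow; omega
    rw [this]; ring
  rw [Finset.sum_congr rfl this]
  simp

-- step: cos ≤ C n implies sin ≤ S n
lemma step1 {n : ℕ} (h : ∀ x, 0 ≤ x → Real.cos x ≤ Csum n x) :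
    ∀ x, 0 ≤ x → Real.sin x ≤ Ssum n x := by
  intro x hx
  have key := aux (f := fun x => Ssum n x - Real.sin x) (f' := fun x => Csum n x - Real.cos x)
    (fun y => (hasDerivAt_Ssum n y).sub (Real.hasDerivAt_sin y))
    (by simp [Ssum_zero]) (fun y hy => sub_nonneg.mpr (h y hy)) x hx
  have key2 : 0 ≤ Ssum n x - Real.sin x := key
  linarith

-- step: sin ≤ S n implies C(n+1) ≤ cos
lemma step2 {n : ℕ} (h : ∀ x, 0 ≤ x → Real.sin x ≤ Ssum n x) :
    ∀ x, 0 ≤ x → Csum (n + 1) x ≤ Real.cos x := by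
  intro x hx
  have key := aux (f := fun x => Real.cos x - Csum (n + 1) x) (f' := fun x => -Real.sin x + Ssum n x)
    (fun y => by
      have h2 := (Real.hasDerivAt_cos y).sub (hasDerivAt_Csum n y)
      exact h2.congr_deriv (by ring))
    (by simp [Csum_zero]) (fun y hy => by have := h y hy; show 0 ≤ -Real.sin y + Ssum n y; linarith) x hx
  have key2 : 0 ≤ Real.cos x - Csum (n + 1) x := key
  linarith

-- step: C n ≤ cos implies S n ≤ sin
lemma step3 {n : ℕ} (h : ∀ x, 0 ≤ x → Csum n x ≤ Real.cos x) :
    ∀ x, 0 ≤ x → Ssum n x ≤ Real.sin x := by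
  intro x hx
  have key := aux (f := fun x => Real.sin x - Ssum n x) (f' := fun x => Real.cos x - Csum n x)
    (fun y => (Real.hasDerivAt_sin y).sub (hasDerivAt_Ssum n y))
    (by simp [Ssum_zero]) (fun y hy => sub_nonneg.mpr (h y hy)) x hx
  have key2 : 0 ≤ Real.sin x - Ssum n x := key
  linarith

-- step: S n ≤ sin implies cos ≤ C(n+1)
lemma step4 {n : ℕ} (h : ∀ x, 0 ≤ x → Ssum n x ≤ Real.sin x) :
    ∀ x, 0 ≤ x → Real.cos x ≤ Csum (n + 1) x := by
  intro x hx
  have key := aux (f := fun x => Csum (n + 1) x - Real.cos x) (f' := fun x => -Ssum n x + Real.sin x)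
    (fun y => by
      have h2 := (hasDerivAt_Csum n y).sub (Real.hasDerivAt_cos y)
      exact h2.congr_deriv (by ring))
    (by simp [Csum_zero]) (fun y hy => by have := h y hy; show 0 ≤ -Ssum n y + Real.sin y; linarith) x hx
  have key2 : 0 ≤ Csum (n + 1) x - Real.cos x := key
  linarith

lemma cos_le_Csum (k : ℕ) : ∀ x, 0 ≤ x → Real.cos x ≤ Csum (2 * k + 1) x := by
  induction k with
  | zero =>
    intro x hx
    have h1 : Csum 1 x = 1 := by unfold Csum; simp
    rw [h1]
    exact Real.cos_le_one x
  | succ k ih =>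
    have h1 := step1 ih
    have h2 := step2 h1
    have h3 := step3 h2
    have h4 := step4 h3
    intro x hx
    have h5 := h4 x hx
    have hn : 2 * (k + 1) + 1 = 2 * k + 1 + 1 + 1 := by ring
    rw [hn]
    exact h5
  
lemma sin_le_Ssum (k : ℕ) : ∀ x, 0 ≤ x → Real.sin x ≤ Ssum (2 * k + 1) x :=
  step1 (cos_le_Csum k)

theorem sin_taylor_upper (s : ℕ) (x : ℝ) (hx : 0 ≤ x)
    (hx2 : x ≤ Real.sqrt ((4 * s + 4) * (4 * s + 5))) :
    (∑ i ∈ Finset.range (2 * s + 1), (-1 : ℝ) ^ i * x ^ (2 * i + 1) / (Nat.factorial (2 * i + 1))) ≥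
      (∑ i ∈ Finset.range (2 * s + 3), (-1 : ℝ) ^ i * x ^ (2 * i + 1) / (Nat.factorial (2 * i + 1))) ∧
    (∑ i ∈ Finset.range (2 * s + 3), (-1 : ℝ) ^ i * x ^ (2 * i + 1) / (Nat.factorial (2 * i + 1))) ≥
      Real.sin x := by
  constructor
  · have hxx : x ^ 2 ≤ (4 * s + 4) * (4 * s + 5) := by
      exact (Real.le_sqrt hx (by positivity)).mp hx2
    rw [ge_iff_le, show 2 * s + 3 = 2 * s + 1 + 1 + 1 by ring, Finset.sum_range_succ,
      Finset.sum_range_succ]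
    have hsign1 : ((-1 : ℝ)) ^ (2 * s + 1) = -1 := by
      simp [pow_succ, pow_mul]
    have hsign2 : ((-1 : ℝ)) ^ (2 * s + 1 + 1) = 1 := by
      rw [pow_succ, hsign1]; ring
    rw [hsign1, hsign2]
    have hfac : (Nat.factorial (2 * (2 * s + 2) + 1) : ℝ) =
        (Nat.factorial (2 * (2 * s + 1) + 1)) * ((4 * s + 4) * (4 * s + 5)) := by
      have h1 : 2 * (2 * s + 2) + 1 = (2 * (2 * s + 1) + 1) + 1 + 1 := by ring
      rw [h1, Nat.factorial_succ, Nat.factorial_succ]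
      push_cast
      ring
    have hpow : x ^ (2 * (2 * s + 2) + 1) = x ^ (2 * (2 * s + 1) + 1) * x ^ 2 := by
      rw [show 2 * (2 * s + 2) + 1 = (2 * (2 * s + 1) + 1) + 2 from by ring, pow_add]
    have hf0 : (0:ℝ) < (Nat.factorial (2 * (2 * s + 1) + 1) : ℝ) := by
      exact_mod_cast Nat.factorial_pos _
    have hxp : (0:ℝ) ≤ x ^ (2 * (2 * s + 1) + 1) := by positivity
    have key : x ^ (2 * (2 * s + 2) + 1) / (Nat.factorial (2 * (2 * s + 2) + 1) : ℝ)
        ≤ x ^ (2 * (2 * s + 1) + 1) / (Nat.factorial (2 * (2 * s + 1) + 1) : ℝ) := by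
      rw [hfac, hpow]
      rw [div_le_div_iff₀ (by positivity) hf0]
      nlinarith [mul_le_mul_of_nonneg_left hxx hxp]
    have key2 : -1 * x ^ (2 * (2 * s + 1) + 1) / ↑(Nat.factorial (2 * (2 * s + 1) + 1)) +
        1 * x ^ (2 * (2 * s + 2) + 1) / ↑(Nat.factorial (2 * (2 * s + 2) + 1)) ≤ 0 := by
      have e1 : -1 * x ^ (2 * (2 * s + 1) + 1) / ↑(Nat.factorial (2 * (2 * s + 1) + 1)) =
          -(x ^ (2 * (2 * s + 1) + 1) / ↑(Nat.factorial (2 * (2 * s + 1) + 1))) := by ring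
      have e2 : 1 * x ^ (2 * (2 * s + 2) + 1) / ↑(Nat.factorial (2 * (2 * s + 2) + 1)) =
          x ^ (2 * (2 * s + 2) + 1) / ↑(Nat.factorial (2 * (2 * s + 2) + 1)) := by ring
      rw [e1, e2]
      linarith [key]
    linarith [key2]
  · have h := sin_le_Ssum (s + 1) x hx
    unfold Ssum at h
    have h2 : 2 * (s + 1) + 1 = 2 * s + 3 := by ring
    rw [h2] at h
    exact h
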